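/- Let g and h be integers with g ≥ h ≥ 2. Every infinite C_h[g] set A of positive integers satisfies liminf_{x→∞} A(x) / x^{1-1/h} = 0. -/

import Mathlib

/-- `A` is a `C_h[g]` set: there do not exist a set `X` of `h` integers and `g` pairwise
distinct integers `k_1, …, k_g` such that `X + k_i ⊆ A` for every `i`. -/
def IsChgSet (h g : ℕ) (A : Set ℤ) : Prop :=
  ¬ ∃ (X : Finset ℤ) (k : Fin g → ℤ), X.card = h ∧ Function.Injective k ∧
      ∀ i : Fin g, ∀ x ∈ X, x + k i ∈ A

open Classical in
/-- The counting function `A(x) = |{a ∈ A : a ≤ x}|` of a set of positive integers. -/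
noncomputable def countFn (A : Set ℤ) (x : ℕ) : ℕ :=
  ((Finset.Icc (1 : ℤ) x).filter (· ∈ A)).card

open Finset

open Classical in
noncomputable def cntA (A : Set ℤ) (u v : ℕ) : ℕ :=
  ((Finset.Ioc (u : ℤ) (v : ℤ)).filter (· ∈ A)).card

open Classical in
lemma cntA_add (A : Set ℤ) {u v w : ℕ} (h1 : u ≤ v) (h2 : v ≤ w) :
    cntA A u v + cntA A v w = cntA A u w := by
  unfold cntA
  rw [← Finset.card_union_of_disjoint, ← Finset.filter_union,
    Finset.Ioc_union_Ioc_eq_Ioc (by exact_mod_cast h1) (by exact_mod_cast h2)]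
  · rw [Finset.disjoint_left]
    intro x hx hx'
    simp only [Finset.mem_filter, Finset.mem_Ioc] at hx hx'
    omega

lemma cntA_tele (A : Set ℤ) (q D : ℕ) :
    ∀ M : ℕ, cntA A q (q + M * D) = ∑ i ∈ Finset.range M, cntA A (q + i * D) (q + (i + 1) * D) := by
  intro M
  induction M with
  | zero => simp [cntA]
  | succ M ih =>
    rw [Finset.sum_range_succ, ← ih, cntA_add A (u := q) (v := q + M * D) (w := q + (M+1) * D)]
    · exact Nat.le_add_right _ _
    · have : M * D ≤ (M + 1) * D := Nat.mul_le_mul_right _ (Nat.le_succ _)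
      omega


lemma choose_le_pow' (n k : ℕ) : n.choose k ≤ n ^ k := by
  induction k with
  | zero => simp
  | succ k ih =>
    calc n.choose (k+1) ≤ n.choose (k+1) * (k+1) := Nat.le_mul_of_pos_right _ (Nat.succ_pos k)
    _ = n.choose k * (n - k) := Nat.choose_succ_right_eq n k
    _ ≤ n ^ k * n := Nat.mul_le_mul ih (Nat.sub_le n k)
    _ = n ^ (k+1) := (pow_succ n k).symm

open Classical in
lemma budget {h g : ℕ} {A : Set ℤ} (hA : IsChgSet h g A) (hh : 2 ≤ h) (hg : 1 ≤ g)
    (D : ℕ) (hD : 1 ≤ D) (S : Finset (Finset ℤ))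
    (hS : ∀ s ∈ S, s.card = h ∧ (∀ x ∈ s, x ∈ A) ∧ ∃ a : ℤ, ∀ x ∈ s, a ≤ x ∧ x < a + D) :
    S.card ≤ (g - 1) * D ^ (h - 1) := by
  classical
  set μ : Finset ℤ → ℤ := fun s => s.min.untopD 0 with hμdef
  set σ : Finset ℤ → Finset ℤ := fun s => s.image (fun z => z - μ s) with hσdef
  have hne : ∀ s ∈ S, s.Nonempty := fun s hs => Finset.card_pos.mp (by rw [(hS s hs).1]; omega)
  have hμmem : ∀ s ∈ S, μ s ∈ s ∧ ∀ x ∈ s, μ s ≤ x := by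
    intro s hs
    obtain ⟨b, hb⟩ := Finset.min_of_nonempty (hne s hs)
    have hμb : μ s = b := by simp [hμdef, hb]
    rw [hμb]
    exact ⟨Finset.mem_of_min hb, fun x hx => Finset.min_le_of_eq hx hb⟩
  have hrec : ∀ s : Finset ℤ, (σ s).image (fun z => z + μ s) = s := by
    intro s
    rw [hσdef]; simp only
    rw [Finset.image_image]
    have : ((fun z => z + μ s) ∘ fun z => z - μ s) = id := by funext z; simp
    rw [this, Finset.image_id]
  have hσcard : ∀ s ∈ S, (σ s).card = h := by
    intro s hs
    rw [hσdef]; simp only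
    rw [Finset.card_image_of_injective _ (sub_left_injective), (hS s hs).1]
  -- fiber bound
  have hfib : ∀ P ∈ S.image σ, (S.filter (fun s => σ s = P)).card ≤ g - 1 := by
    intro P hP
    by_contra hcon
    push_neg at hcon
    have hgle : g ≤ (S.filter (fun s => σ s = P)).card := by omega
    obtain ⟨t, htsub, htcard⟩ := Finset.exists_subset_card_eq hgle
    have e : Fin g ≃ {x // x ∈ t} := (t.equivFin.trans (finCongr htcard)).symm
    have hmem : ∀ i : Fin g, (e i).1 ∈ S ∧ σ (e i).1 = P := by
      intro i
      have := htsub (e i).2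
      simp only [Finset.mem_filter] at this
      exact this
    obtain ⟨s₀, hs₀S, hs₀P⟩ : ∃ s, s ∈ S ∧ σ s = P := ⟨(e ⟨0, by omega⟩).1, hmem _⟩
    refine hA ⟨P, fun i => μ (e i).1, ?_, ?_, ?_⟩
    · rw [← hs₀P]; exact hσcard _ hs₀S
    · intro i j hij
      have hi := hmem i; have hj := hmem j
      simp only at hij
      have : (e i).1 = (e j).1 := by
        rw [← hrec (e i).1, ← hrec (e j).1, hi.2, hj.2, hij]
      exact e.injective (Subtype.ext this)
    · intro i x hx
      have hi := hmem i
      rw [← hi.2, hσdef] at hx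
      simp only [Finset.mem_image] at hx
      obtain ⟨z, hz, rfl⟩ := hx
      have : z - μ (e i).1 + μ (e i).1 = z := by ring
      rw [this]
      exact (hS _ hi.1).2.1 z hz
  -- image bound
  have himg : (S.image σ).card ≤ D ^ (h - 1) := by
    have hmaps : ∀ P ∈ S.image σ, P.erase 0 ∈ (Finset.Icc (1:ℤ) ((D:ℤ)-1)).powersetCard (h-1) := by
      intro P hP
      obtain ⟨s, hsS, rfl⟩ := Finset.mem_image.mp hP
      obtain ⟨a, ha⟩ := (hS s hsS).2.2
      have h0mem : (0:ℤ) ∈ σ s := by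
        rw [hσdef]
        exact Finset.mem_image.mpr ⟨μ s, (hμmem s hsS).1, by ring⟩
      rw [Finset.mem_powersetCard]
      constructor
      · intro x hx
        have hx0 : x ≠ 0 := (Finset.mem_erase.mp hx).1
        have hxP : x ∈ σ s := (Finset.mem_erase.mp hx).2
        rw [hσdef] at hxP
        obtain ⟨z, hz, rfl⟩ := Finset.mem_image.mp hxP
        have h1 := (ha z hz).1
        have h2 := (ha z hz).2
        have h3 := (hμmem s hsS).2 z hz
        have h4 := (ha (μ s) ((hμmem s hsS).1)).1
        rw [Finset.mem_Icc]
        omega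
      · rw [Finset.card_erase_of_mem h0mem, hσcard s hsS]
    have hinj : Set.InjOn (fun P : Finset ℤ => P.erase 0) (S.image σ) := by
      intro P hP Q hQ hPQ
      obtain ⟨s, hsS, rfl⟩ := Finset.mem_image.mp hP
      obtain ⟨u, huS, rfl⟩ := Finset.mem_image.mp hQ
      have h0P : (0:ℤ) ∈ σ s := by
        rw [hσdef]; exact Finset.mem_image.mpr ⟨μ s, (hμmem s hsS).1, by ring⟩
      have h0Q : (0:ℤ) ∈ σ u := by
        rw [hσdef]; exact Finset.mem_image.mpr ⟨μ u, (hμmem u huS).1, by ring⟩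
      rw [← Finset.insert_erase h0P, ← Finset.insert_erase h0Q]
      simp only at hPQ
      rw [hPQ]
    calc (S.image σ).card ≤ ((Finset.Icc (1:ℤ) ((D:ℤ)-1)).powersetCard (h-1)).card :=
          Finset.card_le_card_of_injOn _ hmaps hinj
    _ = ((Finset.Icc (1:ℤ) ((D:ℤ)-1)).card).choose (h-1) := Finset.card_powersetCard _ _
    _ = (D-1).choose (h-1) := by
          rw [Int.card_Icc]
          congr 1
          omega
    _ ≤ (D-1) ^ (h-1) := choose_le_pow' _ _
    _ ≤ D ^ (h-1) := Nat.pow_le_pow_left (Nat.sub_le D 1) _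
  calc S.card ≤ (g-1) * (S.image σ).card := Finset.card_le_mul_card_image S (g-1) hfib
  _ ≤ (g-1) * D ^ (h-1) := Nat.mul_le_mul_left _ himg

open Classical in
lemma blocks {h g : ℕ} {A : Set ℤ} (hA : IsChgSet h g A) (hh : 2 ≤ h) (hg : 1 ≤ g)
    (q D M : ℕ) (hD : 1 ≤ D) :
    ∑ i ∈ Finset.range M, (cntA A (q + i * D) (q + (i+1) * D)).choose h
      ≤ (g-1) * D ^ (h-1) := by
  classical
  set E : ℕ → Finset ℤ := fun i =>
    (Finset.Ioc ((q:ℤ) + i*D) ((q:ℤ) + (i+1)*D)).filter (· ∈ A) with hE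
  have hcnt : ∀ i, cntA A (q + i*D) (q + (i+1)*D) = (E i).card := by
    intro i; unfold cntA; rw [hE]
    congr 2 <;> push_cast <;> ring
  set 𝒮 := (Finset.range M).biUnion (fun i => (E i).powersetCard h) with h𝒮
  have hdisj : ∀ i ∈ Finset.range M, ∀ j ∈ Finset.range M, i ≠ j →
      Disjoint ((E i).powersetCard h) ((E j).powersetCard h) := by
    intro i _ j _ hij
    rw [Finset.disjoint_left]
    intro s hsi hsj
    rw [Finset.mem_powersetCard] at hsi hsj
    obtain ⟨x, hx⟩ := Finset.card_pos.mp (by rw [hsi.2]; omega : 0 < s.card)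
    have h1 := hsi.1 hx; have h2 := hsj.1 hx
    rw [hE] at h1 h2
    simp only [Finset.mem_filter, Finset.mem_Ioc] at h1 h2
    have hDpos : (0:ℤ) < D := by exact_mod_cast hD
    rcases lt_or_gt_of_ne hij with hlt | hlt
    · have hij' : ((i:ℤ)+1) ≤ j := by exact_mod_cast hlt
      nlinarith [h1.1.2, h2.1.1]
    · have hij' : ((j:ℤ)+1) ≤ i := by exact_mod_cast hlt
      nlinarith [h2.1.2, h1.1.1]
  have hcard : 𝒮.card = ∑ i ∈ Finset.range M, ((E i).card).choose h := by
    rw [h𝒮, Finset.card_biUnion hdisj]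
    exact Finset.sum_congr rfl (fun i _ => by rw [Finset.card_powersetCard])
  have hbud := budget hA hh hg D hD 𝒮 ?_
  · rw [hcard] at hbud
    calc ∑ i ∈ Finset.range M, (cntA A (q + i * D) (q + (i+1) * D)).choose h
        = ∑ i ∈ Finset.range M, ((E i).card).choose h :=
          Finset.sum_congr rfl (fun i _ => by rw [hcnt])
    _ ≤ (g-1) * D ^ (h-1) := hbud
  · intro s hs
    rw [h𝒮, Finset.mem_biUnion] at hs
    obtain ⟨i, _, hs⟩ := hs
    rw [Finset.mem_powersetCard] at hs
    refine ⟨hs.2, fun x hx => (Finset.mem_filter.mp (hs.1 hx)).2, ⟨(q:ℤ) + i*D + 1, ?_⟩⟩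
    intro x hx
    have hm := (Finset.mem_filter.mp (hs.1 hx)).1
    rw [Finset.mem_Ioc] at hm
    have : ((i:ℤ)+1)*D = i*D + D := by ring
    constructor
    · linarith [hm.1]
    · linarith [hm.2]

lemma core {h : ℕ} (hh : 2 ≤ h) (M : ℕ) (n : ℕ → ℕ) (m : ℝ) (hm : 0 ≤ m)
    (hsum : m ≤ ∑ i ∈ Finset.range M, (n i : ℝ))
    (hhalf : (h:ℝ) * M ≤ m / 2) :
    (m/2)^h ≤ (M:ℝ)^(h-1) * (h.factorial : ℝ) * ∑ i ∈ Finset.range M, ((n i).choose h : ℝ) := by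
  set f : ℕ → ℝ := fun i => max ((n i : ℝ) - h) 0 with hf
  have hf0 : ∀ i ∈ Finset.range M, 0 ≤ f i := fun i _ => le_max_right _ _
  have h1 : m/2 ≤ ∑ i ∈ Finset.range M, f i := by
    have hle : ∑ i ∈ Finset.range M, ((n i:ℝ) - h) ≤ ∑ i ∈ Finset.range M, f i :=
      Finset.sum_le_sum (fun i _ => le_max_left _ _)
    rw [Finset.sum_sub_distrib] at hle
    have hc : ∑ _i ∈ Finset.range M, (h:ℝ) = M * h := by
      rw [Finset.sum_const, Finset.card_range]; ring
    linarith
  have h2 : (∑ i ∈ Finset.range M, f i)^h ≤ (M:ℝ)^(h-1) * ∑ i ∈ Finset.range M, f i ^ h := by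
    have hpm := pow_sum_div_card_le_sum_pow (s := Finset.range M) (f := f) hf0 (h-1)
    rw [Finset.card_range] at hpm
    have hexp : h - 1 + 1 = h := by omega
    rw [hexp] at hpm
    rcases Nat.eq_zero_or_pos M with rfl | hM
    · simp at h1 ⊢
      have : m = 0 := by linarith
      simp [this, zero_pow (by omega : h ≠ 0)]
    · rw [div_le_iff₀ (by positivity)] at hpm
      linarith
  have h3 : ∀ i ∈ Finset.range M, f i ^ h ≤ (h.factorial : ℝ) * ((n i).choose h) := by
    intro i _
    by_cases hni : h ≤ n i
    · have hfi : f i = ((n i - h : ℕ) : ℝ) := by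
        rw [hf]; simp only
        rw [max_eq_left (sub_nonneg.mpr (Nat.cast_le.mpr hni))]
        push_cast [hni]; ring
      rw [hfi]
      have hnat : (n i - h)^h ≤ h.factorial * (n i).choose h := by
        calc (n i - h)^h ≤ (n i + 1 - h)^h := Nat.pow_le_pow_left (by omega) _
        _ ≤ (n i).descFactorial h := Nat.pow_sub_le_descFactorial _ _
        _ = h.factorial * (n i).choose h := Nat.descFactorial_eq_factorial_mul_choose _ _
      calc (((n i - h : ℕ):ℝ))^h = (((n i - h)^h : ℕ) : ℝ) := by push_cast; ring
      _ ≤ ((h.factorial * (n i).choose h : ℕ) : ℝ) := Nat.cast_le.mpr hnat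
      _ = (h.factorial : ℝ) * ((n i).choose h) := by push_cast; ring
    · have hfi : f i = 0 := max_eq_right (by
        have : (n i : ℝ) ≤ h := Nat.cast_le.mpr (le_of_not_ge hni)
        linarith)
      rw [hfi, zero_pow (by omega : h ≠ 0)]
      positivity
  calc (m/2)^h ≤ (∑ i ∈ Finset.range M, f i)^h :=
        pow_le_pow_left₀ (by positivity) h1 h
  _ ≤ (M:ℝ)^(h-1) * ∑ i ∈ Finset.range M, f i ^ h := h2
  _ ≤ (M:ℝ)^(h-1) * ∑ i ∈ Finset.range M, ((h.factorial : ℝ) * ((n i).choose h)) :=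
      mul_le_mul_of_nonneg_left (Finset.sum_le_sum h3) (by positivity)
  _ = (M:ℝ)^(h-1) * (h.factorial : ℝ) * ∑ i ∈ Finset.range M, ((n i).choose h : ℝ) := by
      rw [← Finset.mul_sum]; ring

open Classical in
lemma cntA_le (A : Set ℤ) (x : ℕ) : cntA A 0 x ≤ x := by
  unfold cntA
  calc ((Finset.Ioc (0:ℤ) (x:ℤ)).filter (· ∈ A)).card ≤ (Finset.Ioc (0:ℤ) (x:ℤ)).card :=
        Finset.card_filter_le _ _
  _ = x := by rw [Int.card_Ioc]; omega

lemma step1 {h g : ℕ} {A : Set ℤ} (hA : IsChgSet h g A) (hh : 2 ≤ h) (hg : 1 ≤ g)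
    (x : ℕ) (hx : 1 ≤ x) :
    (cntA A 0 x : ℝ)^h ≤ (((4*h)^h * h.factorial * g : ℕ) : ℝ) * (x:ℝ)^(h-1) := by
  set m := cntA A 0 x with hmdef
  have hx1 : (1:ℝ) ≤ (x:ℝ)^(h-1) := one_le_pow₀ (by exact_mod_cast hx)
  by_cases hcase : m ≤ 4*h
  · have h1 : (m:ℝ)^h ≤ (((4*h)^h : ℕ):ℝ) := by
      push_cast
      exact pow_le_pow_left₀ (by positivity) (by exact_mod_cast hcase) h
    have h2 : ((4*h)^h : ℕ) ≤ (4*h)^h * h.factorial * g :=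
      le_trans (Nat.le_mul_of_pos_right _ h.factorial_pos) (Nat.le_mul_of_pos_right _ (by omega))
    calc (m:ℝ)^h ≤ (((4*h)^h : ℕ):ℝ) := h1
    _ ≤ (((4*h)^h * h.factorial * g : ℕ) : ℝ) := by exact_mod_cast h2
    _ ≤ _ := le_mul_of_one_le_right (by positivity) hx1
  · push_neg at hcase
    have hm4h : 4*h + 1 ≤ m := hcase
    have hmx : m ≤ x := cntA_le A x
    have hmpos : 0 < m := by omega
    set D := (4*h*x)/m + 1 with hDdef
    set M := x/D + 1 with hMdef
    have hD1 : 1 ≤ D := by rw [hDdef]; exact Nat.succ_le_succ (Nat.zero_le _)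
    have hDx : D ≤ x := by
      have l1 : (4*h*x)/m ≤ (4*h*x)/(4*h+1) := Nat.div_le_div_left hm4h (by omega)
      have l2 : (4*h*x)/(4*h+1) < x := by
        rw [Nat.div_lt_iff_lt_mul (by omega)]
        nlinarith
      rw [hDdef]
      exact Nat.succ_le_of_lt (lt_of_le_of_lt l1 l2)
    have hxMD : x ≤ M*D := by
      have := Nat.div_add_mod x D
      have := Nat.mod_lt x (show 0 < D by omega)
      rw [hMdef]
      nlinarith
    have hMD2x : M*D ≤ 2*x := by
      have := Nat.div_mul_le_self x D
      rw [hMdef]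
      nlinarith
    have hDreal : (4*h*x : ℝ)/m ≤ (D:ℝ) := by
      rw [div_le_iff₀ (by exact_mod_cast hmpos)]
      have : 4*h*x < m*D := by
        have h1 := Nat.div_add_mod (4*h*x) m
        have h2 := Nat.mod_lt (4*h*x) hmpos
        rw [hDdef]
        nlinarith
      calc (4*h*x:ℝ) = ((4*h*x : ℕ):ℝ) := by push_cast; ring
      _ ≤ ((m*D : ℕ):ℝ) := by exact_mod_cast this.le
      _ = (D:ℝ)*m := by push_cast; ring
    have hMreal : (M:ℝ) ≤ (m:ℝ)/(4*h) + 1 := by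
      have l1 : ((x/D : ℕ):ℝ) ≤ (x:ℝ)/(D:ℝ) := Nat.cast_div_le
      have hDrpos : (0:ℝ) < (4*h*x:ℝ)/m := by positivity
      have l2 : (x:ℝ)/(D:ℝ) ≤ (x:ℝ)/((4*h*x:ℝ)/m) := by
        apply div_le_div_of_nonneg_left (by positivity) hDrpos hDreal
      have l3 : (x:ℝ)/((4*h*x:ℝ)/m) = (m:ℝ)/(4*h) := by
        field_simp
      have : (M:ℝ) = ((x/D : ℕ):ℝ) + 1 := by rw [hMdef]; push_cast; ring
      rw [this]
      linarith
    have hhalf : (h:ℝ)*M ≤ (m:ℝ)/2 := by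
      have hhpos : (0:ℝ) < h := by positivity
      have l1 : (h:ℝ)*M ≤ (h:ℝ)*((m:ℝ)/(4*h) + 1) := by
        apply mul_le_mul_of_nonneg_left hMreal (by positivity)
      have l2 : (h:ℝ)*((m:ℝ)/(4*h) + 1) = (m:ℝ)/4 + h := by
        field_simp
      have l3 : (h:ℝ) ≤ (m:ℝ)/4 := by
        have : (4*h : ℝ) ≤ (m:ℝ) := by exact_mod_cast (by omega : 4*h ≤ m)
        linarith
      linarith
    have hsum : (m:ℝ) ≤ ∑ i ∈ Finset.range M, ((cntA A (0 + i*D) (0 + (i+1)*D) : ℕ):ℝ) := by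
      have htele := cntA_tele A 0 D M
      have hmono := cntA_add A (Nat.zero_le x) hxMD
      have : m ≤ cntA A 0 (0 + M*D) := by
        simp only [Nat.zero_add] at htele ⊢
        omega
      calc (m:ℝ) ≤ ((cntA A 0 (0 + M*D) : ℕ):ℝ) := by exact_mod_cast this
      _ = _ := by rw [htele]; push_cast; ring
    have hcore := core hh M (fun i => cntA A (0 + i*D) (0 + (i+1)*D)) (m:ℝ) (by positivity) hsum hhalf
    have hblocks := blocks hA hh hg 0 D M hD1
    have hblocksR : (∑ i ∈ Finset.range M, ((cntA A (0+i*D) (0+(i+1)*D)).choose h : ℝ))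
        ≤ (((g-1) * D^(h-1) : ℕ) : ℝ) := by exact_mod_cast hblocks
    have hchain : ((m:ℝ)/2)^h ≤ (M:ℝ)^(h-1) * (h.factorial:ℝ) * (((g-1)*D^(h-1):ℕ):ℝ) := by
      calc ((m:ℝ)/2)^h ≤ (M:ℝ)^(h-1) * (h.factorial:ℝ) *
            ∑ i ∈ Finset.range M, ((cntA A (0+i*D) (0+(i+1)*D)).choose h : ℝ) := hcore
      _ ≤ _ := mul_le_mul_of_nonneg_left hblocksR (by positivity)
    have hRHS : (M:ℝ)^(h-1) * (h.factorial:ℝ) * (((g-1)*D^(h-1):ℕ):ℝ)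
        ≤ (h.factorial:ℝ) * g * (2*(x:ℝ))^(h-1) := by
      have l1 : (((g-1)*D^(h-1):ℕ):ℝ) ≤ (g:ℝ) * (D:ℝ)^(h-1) := by
        push_cast
        apply mul_le_mul_of_nonneg_right _ (by positivity)
        have : ((g-1:ℕ):ℝ) ≤ (g:ℝ) := by exact_mod_cast Nat.sub_le g 1
        linarith
      have l2 : (M:ℝ)^(h-1) * ((D:ℝ)^(h-1)) = ((M*D:ℕ):ℝ)^(h-1) := by push_cast; rw [mul_pow]
      have l3 : ((M*D:ℕ):ℝ)^(h-1) ≤ (2*(x:ℝ))^(h-1) := by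
        apply pow_le_pow_left₀ (by positivity)
        calc ((M*D:ℕ):ℝ) ≤ ((2*x:ℕ):ℝ) := by exact_mod_cast hMD2x
        _ = 2*(x:ℝ) := by push_cast; ring
      calc (M:ℝ)^(h-1) * (h.factorial:ℝ) * (((g-1)*D^(h-1):ℕ):ℝ)
          ≤ (M:ℝ)^(h-1) * (h.factorial:ℝ) * ((g:ℝ) * (D:ℝ)^(h-1)) := by
            apply mul_le_mul_of_nonneg_left l1 (by positivity)
      _ = (h.factorial:ℝ) * g * ((M:ℝ)^(h-1) * (D:ℝ)^(h-1)) := by ring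
      _ = (h.factorial:ℝ) * g * ((M*D:ℕ):ℝ)^(h-1) := by rw [l2]
      _ ≤ _ := mul_le_mul_of_nonneg_left l3 (by positivity)
    have hfinal : ((m:ℝ))^h ≤ (2:ℝ)^h * ((h.factorial:ℝ) * g * (2*(x:ℝ))^(h-1)) := by
      have : ((m:ℝ))^h = (2:ℝ)^h * ((m:ℝ)/2)^h := by
        rw [div_pow]
        field_simp
      rw [this]
      apply mul_le_mul_of_nonneg_left (le_trans hchain hRHS) (by positivity)
    have hcoef : (2:ℝ)^h * ((h.factorial:ℝ) * g * (2*(x:ℝ))^(h-1))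
        = (2:ℝ)^h * 2^(h-1) * (h.factorial:ℝ) * g * (x:ℝ)^(h-1) := by
      rw [mul_pow]
      ring
    have hcoef2 : (2:ℝ)^h * 2^(h-1) ≤ ((4*h:ℕ):ℝ)^h := by
      have l1 : (2:ℝ)^h * 2^(h-1) ≤ (2:ℝ)^h * 2^h := by
        apply mul_le_mul_of_nonneg_left _ (by positivity)
        apply pow_le_pow_right₀ (by norm_num) (by omega)
      have l2 : (2:ℝ)^h * 2^h = (4:ℝ)^h := by
        rw [← mul_pow]; norm_num
      have l3 : (4:ℝ)^h ≤ ((4*h:ℕ):ℝ)^h := by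
        apply pow_le_pow_left₀ (by norm_num)
        push_cast
        have : (1:ℝ) ≤ (h:ℝ) := by exact_mod_cast (show 1 ≤ h by omega)
        linarith
      linarith
    calc ((m:ℝ))^h ≤ (2:ℝ)^h * 2^(h-1) * (h.factorial:ℝ) * g * (x:ℝ)^(h-1) := by
          rw [← hcoef]; exact hfinal
    _ ≤ ((4*h:ℕ):ℝ)^h * (h.factorial:ℝ) * g * (x:ℝ)^(h-1) := by
          apply mul_le_mul_of_nonneg_right _ (by positivity)
          apply mul_le_mul_of_nonneg_right _ (by positivity)
          exact mul_le_mul_of_nonneg_right hcoef2 (by positivity)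
    _ = (((4*h)^h * h.factorial * g : ℕ) : ℝ) * (x:ℝ)^(h-1) := by push_cast; ring

lemma sum_split (F K : ℕ → ℕ) :
    ∀ t, ∑ i ∈ Finset.range (∑ j ∈ Finset.range t, K j), F i
      = ∑ j ∈ Finset.range t, ∑ i ∈ Finset.range (K j), F ((∑ j' ∈ Finset.range j, K j') + i) := by
  intro t
  induction t with
  | zero => simp
  | succ t ih =>
    rw [Finset.sum_range_succ (f := K), Finset.sum_range_succ
      (f := fun j => ∑ i ∈ Finset.range (K j), F ((∑ j' ∈ Finset.range j, K j') + i)), ← ih]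
    set S := ∑ j ∈ Finset.range t, K j with hS
    have key := Finset.sum_Ico_consecutive F (Nat.zero_le S) (Nat.le_add_right S (K t))
    have e1 : Finset.Ico 0 S = Finset.range S := (Finset.range_eq_Ico S).symm
    have e2 : Finset.Ico 0 (S + K t) = Finset.range (S + K t) :=
      (Finset.range_eq_Ico (S + K t)).symm
    have e3 : ∑ i ∈ Finset.Ico S (S + K t), F i = ∑ i ∈ Finset.range (K t), F (S + i) := by
      rw [Finset.sum_Ico_eq_sum_range]
      have l : S + K t - S = K t := by omega
      rw [l]
    rw [e1, e2, e3] at key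
    exact key.symm

lemma mainlem {h g : ℕ} {A : Set ℤ} (hA : IsChgSet h g A) (hh : 2 ≤ h) (hgh : h ≤ g)
    (ε : ℝ) (hε : 0 < ε) (x₀ : ℕ)
    (H1 : ∀ x : ℕ, x₀ ≤ x → ε^h * (x:ℝ)^(h-1) ≤ (cntA A 0 x : ℝ)^h) : False := by
  have hg : 1 ≤ g := by omega
  set B : ℕ := (4*h)^h * h.factorial * g with hBdef
  have hBpos : 0 < B := by
    apply Nat.mul_pos (Nat.mul_pos (Nat.pow_pos (by omega)) h.factorial_pos) (by omega)
  obtain ⟨K, hK2, hKpow⟩ : ∃ K : ℕ, 2 ≤ K ∧ (2:ℝ)^h * B ≤ ε^h * (K:ℝ)^(h-1) := by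
    refine ⟨⌈(2:ℝ)^h * B / ε^h⌉₊ + 2, by omega, ?_⟩
    set c : ℕ := ⌈(2:ℝ)^h * B / ε^h⌉₊ + 2 with hc
    have hc1 : (1:ℝ) ≤ (c:ℝ) := by exact_mod_cast (by omega : 1 ≤ c)
    have hbnd : (2:ℝ)^h * B / ε^h ≤ (c:ℝ) := by
      calc (2:ℝ)^h * B / ε^h ≤ (⌈(2:ℝ)^h * B / ε^h⌉₊ : ℝ) := Nat.le_ceil _
      _ ≤ (c:ℝ) := by exact_mod_cast (by omega : ⌈(2:ℝ)^h * B / ε^h⌉₊ ≤ c)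
    have l1 : (c:ℝ) ≤ (c:ℝ)^(h-1) := le_self_pow₀ hc1 (by omega)
    have l2 : (2:ℝ)^h * B / ε^h ≤ (c:ℝ)^(h-1) := le_trans hbnd l1
    rw [div_le_iff₀ (by positivity)] at l2
    nlinarith [l2]
  have hK1R : (1:ℝ) ≤ (K:ℝ) := by exact_mod_cast (by omega : 1 ≤ K)
  set x₁ : ℕ := max x₀ 1 with hx₁def
  have hsel : ∀ y : ℕ, x₁ ≤ y →
      (ε/2)^h * ((K*y:ℕ):ℝ)^(h-1) ≤ (cntA A y (K*y) : ℝ)^h := by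
    intro y hy
    have hy1 : 1 ≤ y := le_trans (le_max_right _ _) hy
    have hyx₀ : x₀ ≤ y := le_trans (le_max_left _ _) hy
    have hyKy : y ≤ K*y := Nat.le_mul_of_pos_left y (by omega)
    have hH := H1 (K*y) (le_trans hyx₀ hyKy)
    have hstep := step1 hA hh hg y hy1
    have hcKy0 : (0:ℝ) ≤ (cntA A 0 (K*y) : ℝ) := by positivity
    have h2c : 2*(cntA A 0 y : ℝ) ≤ (cntA A 0 (K*y) : ℝ) := by
      rw [← pow_le_pow_iff_left₀ (by positivity) hcKy0 (show h ≠ 0 by omega)]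
      calc (2*(cntA A 0 y : ℝ))^h = (2:ℝ)^h * (cntA A 0 y : ℝ)^h := by rw [mul_pow]
      _ ≤ (2:ℝ)^h * ((B:ℝ) * (y:ℝ)^(h-1)) :=
          mul_le_mul_of_nonneg_left hstep (by positivity)
      _ = (2:ℝ)^h * B * (y:ℝ)^(h-1) := by ring
      _ ≤ ε^h * (K:ℝ)^(h-1) * (y:ℝ)^(h-1) := mul_le_mul_of_nonneg_right hKpow (by positivity)
      _ = ε^h * ((K*y:ℕ):ℝ)^(h-1) := by push_cast; rw [mul_pow]; ring
      _ ≤ (cntA A 0 (K*y) : ℝ)^h := hH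
    have hadd := cntA_add A (Nat.zero_le y) hyKy
    have hcnt : (cntA A y (K*y) : ℝ) = (cntA A 0 (K*y) : ℝ) - (cntA A 0 y : ℝ) := by
      have l : (cntA A 0 y : ℝ) + (cntA A y (K*y) : ℝ) = (cntA A 0 (K*y) : ℝ) := by
        exact_mod_cast hadd
      linarith
    have hge : (cntA A 0 (K*y):ℝ)/2 ≤ (cntA A y (K*y) : ℝ) := by rw [hcnt]; linarith
    calc (ε/2)^h * ((K*y:ℕ):ℝ)^(h-1) = (ε^h * ((K*y:ℕ):ℝ)^(h-1))/2^h := by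
          rw [div_pow]; ring
    _ ≤ (cntA A 0 (K*y):ℝ)^h / 2^h := by gcongr
    _ = ((cntA A 0 (K*y):ℝ)/2)^h := by rw [div_pow]
    _ ≤ (cntA A y (K*y) : ℝ)^h := pow_le_pow_left₀ (by positivity) hge h
  obtain ⟨T, hTgt⟩ : ∃ T : ℕ, (g:ℝ) * h.factorial * (4/ε)^h < T := by
    refine ⟨⌈(g:ℝ) * h.factorial * (4/ε)^h⌉₊ + 1, ?_⟩
    calc (g:ℝ)*h.factorial*(4/ε)^h ≤ (⌈(g:ℝ)*h.factorial*(4/ε)^h⌉₊ : ℝ) := Nat.le_ceil _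
    _ < _ := by push_cast; linarith
  set κ : ℝ := (ε/4)^h / h.factorial with hκdef
  have hκpos : 0 < κ := by positivity
  have hκT : (g:ℝ) - 1 < κ * T := by
    have l1 : (g:ℝ) * h.factorial * (4/ε)^h < T := hTgt
    have l2 : κ * ((g:ℝ)*h.factorial*(4/ε)^h) = g := by
      rw [hκdef]
      have e1 : (ε/4)^h*(4/ε)^h = 1 := by
        rw [← mul_pow]
        have : (ε/4)*(4/ε) = 1 := by field_simp
        rw [this, one_pow]
      have hfac : (0:ℝ) < h.factorial := by exact_mod_cast h.factorial_pos
      field_simp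
      nlinarith [e1]
    have hgpos : (0:ℝ) < g := by exact_mod_cast hg
    have l3 : (g:ℝ) - 1 < g := by linarith
    calc (g:ℝ) - 1 < g := l3
    _ = κ * ((g:ℝ)*h.factorial*(4/ε)^h) := l2.symm
    _ ≤ κ * T := mul_le_mul_of_nonneg_left l1.le hκpos.le
  obtain ⟨X, hXx₁, hXbig⟩ : ∃ X : ℕ, x₁ ≤ X ∧ (4*h/ε)^h * (K:ℝ)^(T+2) ≤ (X:ℝ) := by
    refine ⟨max x₁ (⌈(4*h/ε)^h * (K:ℝ)^(T+2)⌉₊ + 1), le_max_left _ _, ?_⟩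
    have l : (⌈(4*h/ε)^h * (K:ℝ)^(T+2)⌉₊ + 1 : ℕ) ≤ max x₁ (⌈(4*h/ε)^h * (K:ℝ)^(T+2)⌉₊ + 1) :=
      le_max_right _ _
    calc (4*h/ε)^h * (K:ℝ)^(T+2) ≤ (⌈(4*h/ε)^h * (K:ℝ)^(T+2)⌉₊ : ℝ) := Nat.le_ceil _
    _ ≤ _ := by exact_mod_cast le_trans (Nat.le_succ _) l
  have hX1 : 1 ≤ X := le_trans (le_max_right _ _ : 1 ≤ x₁) hXx₁
  set D : ℕ := (K-1)*K*X with hDdef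
  have hD1 : 1 ≤ D := by
    rw [hDdef]
    exact Nat.mul_pos (Nat.mul_pos (by omega) (by omega)) (by omega)
  have geom : ∀ t : ℕ, (K-1) * ∑ j ∈ Finset.range t, K^j = K^t - 1 := by
    intro t; induction t with
    | zero => simp
    | succ t ih =>
      rw [Finset.sum_range_succ, Nat.mul_add, ih]
      have h1 : (K-1)*K^t = K*K^t - K^t := by rw [Nat.sub_mul, one_mul]
      have h2 : 1 ≤ K^t := Nat.one_le_pow _ _ (by omega)
      have h3 : K^t ≤ K*K^t := Nat.le_mul_of_pos_left _ (by omega)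
      rw [pow_succ]
      have h4 : K^t * K = K * K^t := Nat.mul_comm _ _
      omega
  set o : ℕ → ℕ := fun j => ∑ j' ∈ Finset.range j, K^j' with hodef
  set q : ℕ := K*X with hqdef
  set n : ℕ → ℕ := fun i => cntA A (q + i*D) (q + (i+1)*D) with hndef
  have harith : ∀ j, q + (o j)*D = K^(j+1)*X := by
    intro j
    rw [hodef, hqdef, hDdef]
    simp only
    have h1 : (∑ j' ∈ Finset.range j, K^j') * ((K-1)*K*X)
        = ((K-1) * ∑ j' ∈ Finset.range j, K^j') * (K*X) := by ring
    rw [h1, geom j]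
    have h2 : 1 ≤ K^j := Nat.one_le_pow _ _ (by omega)
    have h3 : (K^j - 1)*(K*X) = K^j*(K*X) - K*X := by rw [Nat.sub_mul, one_mul]
    rw [h3]
    have h4 : K^(j+1)*X = K^j*(K*X) := by ring
    have h5 : K*X ≤ K^j*(K*X) := Nat.le_mul_of_pos_left _ (by positivity)
    omega
  have hcount : ∀ j, j < T →
      κ * (D:ℝ)^(h-1) ≤ ∑ i ∈ Finset.range (K^j), ((n (o j + i)).choose h : ℝ) := by
    intro j hjT
    have hyx₁ : x₁ ≤ K^(j+1)*X :=
      le_trans hXx₁ (Nat.le_mul_of_pos_left _ (Nat.pow_pos (by omega)))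
    have hKy : K*(K^(j+1)*X) = K^(j+2)*X := by ring
    have hsely := hsel (K^(j+1)*X) hyx₁
    rw [hKy] at hsely
    set y : ℕ := K^(j+1)*X with hydef
    set m : ℕ := cntA A y (K^(j+2)*X) with hmdef
    have hblocki : ∀ i : ℕ, n (o j + i) = cntA A (y + i*D) (y + (i+1)*D) := by
      intro i
      rw [hndef]; simp only
      have e1 : q + (o j + i)*D = y + i*D := by
        rw [Nat.add_mul, ← Nat.add_assoc, harith j]
      have e2 : q + (o j + i + 1)*D = y + (i+1)*D := by
        have : o j + i + 1 = o j + (i+1) := by omega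
        rw [this, Nat.add_mul, ← Nat.add_assoc, harith j]
      rw [e1, e2]
    have hyMD : y + K^j * D = K^(j+2)*X := by
      rw [hDdef, hydef]
      have h1 : K^j*((K-1)*K*X) = (K-1)*(K^(j+1)*X) := by ring
      rw [h1]
      have h2 : (K-1)*(K^(j+1)*X) = K*(K^(j+1)*X) - K^(j+1)*X := by rw [Nat.sub_mul, one_mul]
      have h3 : K^(j+1)*X ≤ K*(K^(j+1)*X) := Nat.le_mul_of_pos_left _ (by omega)
      have h4 : K^(j+2)*X = K*(K^(j+1)*X) := by ring
      omega
    have htele := cntA_tele A y D (K^j)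
    have hmsum : m = ∑ i ∈ Finset.range (K^j), n (o j + i) := by
      rw [hmdef, ← hyMD]
      rw [htele]
      exact Finset.sum_congr rfl (fun i _ => (hblocki i).symm)
    have hsum : (m:ℝ) ≤ ∑ i ∈ Finset.range (K^j), ((n (o j + i) : ℕ):ℝ) := by
      rw [hmsum]; push_cast; exact le_refl _
    have hmh : (ε/2)^h * ((K^(j+2)*X : ℕ):ℝ)^(h-1) ≤ (m:ℝ)^h := hsely
    -- size bound using X
    have hpowsplit : ((K^(j+2)*X : ℕ):ℝ)^(h-1) = (K:ℝ)^((j+2)*(h-1)) * (X:ℝ)^(h-1) := by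
      push_cast
      rw [mul_pow, ← pow_mul]
    have hXpow : (X:ℝ) ≤ (X:ℝ)^(h-1) :=
      le_self_pow₀ (by exact_mod_cast hX1) (by omega)
    have hexp : j*h ≤ (j+2)*(h-1) + (T+2) := by
      have e2 : j*h = j*(h-1) + j := by
        have l : h - 1 + 1 = h := by omega
        calc j*h = j*((h-1)+1) := by rw [l]
        _ = j*(h-1) + j := by ring
      have e1 : (j+2)*(h-1) = j*(h-1) + 2*(h-1) := by ring
      omega
    have hMbound : ((2*h*((K^j : ℕ):ℝ)))^h ≤ (m:ℝ)^h := by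
      have l1 : ((2*h*((K^j : ℕ):ℝ)))^h = (2*h:ℝ)^h * (K:ℝ)^(j*h) := by
        push_cast
        rw [mul_pow, ← pow_mul]
      have l2 : (K:ℝ)^(j*h) ≤ (K:ℝ)^((j+2)*(h-1) + (T+2)) :=
        pow_le_pow_right₀ hK1R hexp
      have l3 : (ε/2)^h * ((K^(j+2)*X : ℕ):ℝ)^(h-1)
          ≥ (ε/2)^h * ((K:ℝ)^((j+2)*(h-1)) * ((4*h/ε)^h * (K:ℝ)^(T+2))) := by
        rw [hpowsplit]
        gcongr
        exact le_trans hXbig hXpow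
      have l4 : (ε/2)^h * ((K:ℝ)^((j+2)*(h-1)) * ((4*h/ε)^h * (K:ℝ)^(T+2)))
          = (2*h:ℝ)^h * (K:ℝ)^((j+2)*(h-1) + (T+2)) := by
        have e : (ε/2) * (4*(h:ℝ)/ε) = 2*h := by field_simp; ring
        calc (ε/2)^h * ((K:ℝ)^((j+2)*(h-1)) * ((4*h/ε)^h * (K:ℝ)^(T+2)))
            = ((ε/2) * (4*(h:ℝ)/ε))^h * ((K:ℝ)^((j+2)*(h-1)) * (K:ℝ)^(T+2)) := by
              rw [mul_pow]; ring
        _ = (2*h:ℝ)^h * ((K:ℝ)^((j+2)*(h-1)) * (K:ℝ)^(T+2)) := by rw [e]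
        _ = (2*h:ℝ)^h * (K:ℝ)^((j+2)*(h-1) + (T+2)) := by rw [← pow_add]
      calc ((2*h*((K^j : ℕ):ℝ)))^h = (2*h:ℝ)^h * (K:ℝ)^(j*h) := l1
      _ ≤ (2*h:ℝ)^h * (K:ℝ)^((j+2)*(h-1) + (T+2)) :=
          mul_le_mul_of_nonneg_left l2 (by positivity)
      _ = (ε/2)^h * ((K:ℝ)^((j+2)*(h-1)) * ((4*h/ε)^h * (K:ℝ)^(T+2))) := l4.symm
      _ ≤ (ε/2)^h * ((K^(j+2)*X : ℕ):ℝ)^(h-1) := l3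
      _ ≤ (m:ℝ)^h := hmh
    have hhalfj : (h:ℝ)*((K^j:ℕ):ℝ) ≤ (m:ℝ)/2 := by
      have l := (pow_le_pow_iff_left₀ (by positivity) (by positivity)
        (show h ≠ 0 by omega)).mp hMbound
      linarith
    have hcore := core hh (K^j) (fun i => n (o j + i)) (m:ℝ) (Nat.cast_nonneg m) hsum hhalfj
    -- lower bound for (m/2)^h
    have hDKj : ((D*K^j : ℕ):ℝ) ≤ ((K^(j+2)*X : ℕ):ℝ) := by
      have l : D*K^j ≤ K^(j+2)*X := by
        rw [hDdef]
        calc (K-1)*K*X*K^j ≤ K*K*X*K^j :=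
          Nat.mul_le_mul_right _ (Nat.mul_le_mul_right _ (Nat.mul_le_mul_right _ (Nat.sub_le _ _)))
        _ = K^(j+2)*X := by ring
      exact_mod_cast l
    have hfacR : (0:ℝ) < (h.factorial:ℝ) := by exact_mod_cast h.factorial_pos
    have hlhs : κ * (D:ℝ)^(h-1) * (((K^j:ℕ):ℝ)^(h-1) * (h.factorial:ℝ)) ≤ ((m:ℝ)/2)^h := by
      have e1 : κ * (D:ℝ)^(h-1) * (((K^j:ℕ):ℝ)^(h-1) * (h.factorial:ℝ))
          = (ε/4)^h * ((D*K^j:ℕ):ℝ)^(h-1) := by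
        rw [hκdef]
        push_cast
        rw [mul_pow]
        field_simp
      have e2 : (ε/4)^h * ((D*K^j:ℕ):ℝ)^(h-1) ≤ (ε/4)^h * ((K^(j+2)*X:ℕ):ℝ)^(h-1) :=
        mul_le_mul_of_nonneg_left
          (pow_le_pow_left₀ (Nat.cast_nonneg _) hDKj _) (by positivity)
      have e3 : (ε/4)^h * ((K^(j+2)*X:ℕ):ℝ)^(h-1)
          = ((ε/2)^h * ((K^(j+2)*X:ℕ):ℝ)^(h-1)) / 2^h := by
        have l : (ε/4:ℝ) = (ε/2)/2 := by ring
        rw [l, div_pow (ε/2) 2 h]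
        ring
      have e4 : ((ε/2)^h * ((K^(j+2)*X:ℕ):ℝ)^(h-1)) / 2^h ≤ (m:ℝ)^h/2^h := by
        gcongr
      have e5 : (m:ℝ)^h/2^h = ((m:ℝ)/2)^h := by rw [div_pow]
      calc κ * (D:ℝ)^(h-1) * (((K^j:ℕ):ℝ)^(h-1) * (h.factorial:ℝ))
          = (ε/4)^h * ((D*K^j:ℕ):ℝ)^(h-1) := e1
      _ ≤ (ε/4)^h * ((K^(j+2)*X:ℕ):ℝ)^(h-1) := e2
      _ = ((ε/2)^h * ((K^(j+2)*X:ℕ):ℝ)^(h-1)) / 2^h := e3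
      _ ≤ (m:ℝ)^h/2^h := e4
      _ = ((m:ℝ)/2)^h := e5
    have hPpos : (0:ℝ) < ((K^j:ℕ):ℝ)^(h-1) * (h.factorial:ℝ) := by
      have : (0:ℝ) < ((K^j:ℕ):ℝ) := by exact_mod_cast Nat.pow_pos (by omega)
      positivity
    have hfin : κ * (D:ℝ)^(h-1) * (((K^j:ℕ):ℝ)^(h-1) * (h.factorial:ℝ))
        ≤ (((K^j:ℕ):ℝ)^(h-1) * (h.factorial:ℝ)) * ∑ i ∈ Finset.range (K^j), ((n (o j + i)).choose h : ℝ) := by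
      calc κ * (D:ℝ)^(h-1) * (((K^j:ℕ):ℝ)^(h-1) * (h.factorial:ℝ)) ≤ ((m:ℝ)/2)^h := hlhs
      _ ≤ ((K^j:ℕ):ℝ)^(h-1) * (h.factorial:ℝ) * ∑ i ∈ Finset.range (K^j), ((n (o j + i)).choose h : ℝ) := hcore
      _ = _ := by ring
    have := le_of_mul_le_mul_left (by
      calc (((K^j:ℕ):ℝ)^(h-1) * (h.factorial:ℝ)) * (κ * (D:ℝ)^(h-1))
          = κ * (D:ℝ)^(h-1) * (((K^j:ℕ):ℝ)^(h-1) * (h.factorial:ℝ)) := by ring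
      _ ≤ _ := hfin) hPpos
    exact this
  -- global budget
  have hbudget := blocks hA hh hg q D (o T) hD1
  have hbudget' : ∑ i ∈ Finset.range (o T), ((n i).choose h : ℝ) ≤ (((g-1)*D^(h-1) : ℕ):ℝ) := by
    exact_mod_cast hbudget
  have hsplit := sum_split (fun i => (n i).choose h) (fun j => K^j) T
  have hsplitR : ∑ i ∈ Finset.range (o T), ((n i).choose h : ℝ)
      = ∑ j ∈ Finset.range T, ∑ i ∈ Finset.range (K^j), ((n (o j + i)).choose h : ℝ) := by
    have := congrArg (Nat.cast : ℕ → ℝ) hsplit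
    push_cast at this
    convert this using 2
  have htot : (T:ℝ) * (κ * (D:ℝ)^(h-1)) ≤ ((g:ℝ)-1) * (D:ℝ)^(h-1) := by
    calc (T:ℝ)*(κ*(D:ℝ)^(h-1)) = ∑ _j ∈ Finset.range T, (κ*(D:ℝ)^(h-1)) := by
          rw [Finset.sum_const, Finset.card_range]; ring
    _ ≤ ∑ j ∈ Finset.range T, ∑ i ∈ Finset.range (K^j), ((n (o j + i)).choose h : ℝ) :=
        Finset.sum_le_sum (fun j hj => hcount j (Finset.mem_range.mp hj))
    _ = ∑ i ∈ Finset.range (o T), ((n i).choose h : ℝ) := hsplitR.symm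
    _ ≤ (((g-1)*D^(h-1) : ℕ):ℝ) := hbudget'
    _ = ((g-1:ℕ):ℝ) * (D:ℝ)^(h-1) := by push_cast; ring
    _ ≤ ((g:ℝ)-1) * (D:ℝ)^(h-1) := by
        apply mul_le_mul_of_nonneg_right _ (by positivity)
        rw [Nat.cast_sub hg]; push_cast; exact le_refl _
  have hDpos : (0:ℝ) < (D:ℝ)^(h-1) := by
    have : (0:ℝ) < (D:ℝ) := by exact_mod_cast hD1
    positivity
  have hfin2 : κ * T ≤ (g:ℝ) - 1 := by
    have l : (κ * T) * (D:ℝ)^(h-1) ≤ ((g:ℝ)-1) * (D:ℝ)^(h-1) := by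
      calc (κ * T) * (D:ℝ)^(h-1) = (T:ℝ) * (κ * (D:ℝ)^(h-1)) := by ring
      _ ≤ _ := htot
    exact le_of_mul_le_mul_right l hDpos
  linarith [hκT]


open Classical in
lemma countFn_eq_cntA (A : Set ℤ) (x : ℕ) : countFn A x = cntA A 0 x := by
  unfold countFn cntA
  congr 1
  ext z
  simp only [Finset.mem_filter, Finset.mem_Icc, Finset.mem_Ioc]
  constructor
  · rintro ⟨⟨h1, h2⟩, h3⟩
    exact ⟨⟨by omega, h2⟩, h3⟩
  · rintro ⟨⟨h1, h2⟩, h3⟩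
    exact ⟨⟨by omega, h2⟩, h3⟩

/-- `liminf_{x→∞} A(x)/x^{1-1/h} = 0` for any infinite `C_h[g]` set of positive integers. -/
theorem stmt3 (g h : ℕ) (hgh : h ≤ g) (hh : 2 ≤ h)
    (A : Set ℤ) (hpos : ∀ a ∈ A, 0 < a) (hinf : A.Infinite) (hA : IsChgSet h g A) :
    Filter.liminf (fun x : ℕ => (countFn A x : ℝ) / (x : ℝ) ^ (1 - (1 : ℝ) / h))
      Filter.atTop = 0 := by
  set f : ℕ → ℝ := fun x => (countFn A x : ℝ) / (x : ℝ) ^ (1 - (1:ℝ)/h) with hf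
  have main : ∀ ε : ℝ, 0 < ε → ¬ (∀ᶠ x in Filter.atTop, ε ≤ f x) := by
    intro ε hε hev
    rw [Filter.eventually_atTop] at hev
    obtain ⟨x₀, hx₀⟩ := hev
    apply mainlem hA hh hgh ε hε (max x₀ 1)
    intro x hx
    have hx1 : 1 ≤ x := le_trans (le_max_right _ _) hx
    have hfx := hx₀ x (le_trans (le_max_left _ _) hx)
    rw [hf] at hfx
    simp only at hfx
    have hxR : (0:ℝ) < (x:ℝ) := by exact_mod_cast hx1
    have hp : (0:ℝ) < (x:ℝ) ^ (1 - (1:ℝ)/h) := Real.rpow_pos_of_pos hxR _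
    have hεx : ε * (x:ℝ)^(1-(1:ℝ)/h) ≤ (countFn A x : ℝ) := by
      rw [← le_div_iff₀ hp]
      exact hfx
    have hpow : ((x:ℝ)^(1-(1:ℝ)/h))^h = (x:ℝ)^(h-1 : ℕ) := by
      rw [← Real.rpow_natCast ((x:ℝ)^(1-(1:ℝ)/h)) h, ← Real.rpow_mul hxR.le]
      have hhR : (h:ℝ) ≠ 0 := by positivity
      have e1 : (1 - (1:ℝ)/h) * h = (h:ℝ) - 1 := by field_simp
      rw [e1]
      have e2 : ((h:ℝ) - 1) = ((h-1 : ℕ) : ℝ) := by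
        rw [Nat.cast_sub (by omega : 1 ≤ h)]
        push_cast
        ring
      rw [e2, Real.rpow_natCast]
    have hfin := pow_le_pow_left₀ (by positivity) hεx h
    rw [mul_pow, hpow, countFn_eq_cntA] at hfin
    exact hfin
  rw [Filter.liminf_eq]
  have h0mem : (0:ℝ) ∈ {a | ∀ᶠ x in Filter.atTop, a ≤ f x} := by
    simp only [Set.mem_setOf_eq]
    filter_upwards with x
    rw [hf]
    positivity
  have hub : ∀ a ∈ {a | ∀ᶠ x in Filter.atTop, a ≤ f x}, a ≤ 0 := by
    intro a ha
    by_contra hcon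
    push_neg at hcon
    exact main a hcon ha
  apply le_antisymm
  · exact csSup_le ⟨0, h0mem⟩ hub
  · exact le_csSup ⟨0, fun a ha => hub a ha⟩ h0mem
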